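/- Comonotonic additivity for the square loss: if X and Y are integrable random variables with comonotonic joint distribution, i.e. F_{X,Y}(x,y) = min{F_X(x), F_Y(y)}, then for the square loss the generalized extremile is additive: e(X+Y; D) = e(X; D) + e(Y; D), where e(Z; D) = ∫₀¹ F_Z^{-1}(u) d(u) du. -/

import Mathlib

open MeasureTheory Set
open scoped ProbabilityTheory

section Aux

variable {Ω : Type*} [MeasureSpace Ω] [IsProbabilityMeasure (ℙ : Measure Ω)]

/-- The cdf of a random variable, as toReal of the probability. -/
private lemma aux_cdf_eq (Z : Ω → ℝ) (hZ : Measurable Z) (x : ℝ) :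
    (ℙ {ω | Z ω ≤ x}).toReal
      = ProbabilityTheory.cdf (Measure.map Z ℙ) x := by
  have : IsProbabilityMeasure (Measure.map Z ℙ) :=
    Measure.isProbabilityMeasure_map hZ.aemeasurable
  rw [ProbabilityTheory.cdf_eq_real, measureReal_def, Measure.map_apply hZ measurableSet_Iic]
  rfl

private lemma aux_mono (Z : Ω → ℝ) (hZ : Measurable Z) :
    Monotone (fun x => (ℙ {ω | Z ω ≤ x}).toReal) := by
  intro a b hab
  simp only [aux_cdf_eq Z hZ]
  exact ProbabilityTheory.monotone_cdf _ hab

private lemma aux_nonempty (Z : Ω → ℝ) (hZ : Measurable Z) {u : ℝ} (hu : u < 1) :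
    ∃ x : ℝ, u ≤ (ℙ {ω | Z ω ≤ x}).toReal := by
  have h := ProbabilityTheory.tendsto_cdf_atTop (Measure.map Z ℙ)
  have h2 := (h.eventually_const_le hu).exists
  obtain ⟨x, hx⟩ := h2
  exact ⟨x, by rw [aux_cdf_eq Z hZ]; exact hx⟩

private lemma aux_bddBelow (Z : Ω → ℝ) (hZ : Measurable Z) {u : ℝ} (hu : 0 < u) :
    BddBelow {x : ℝ | u ≤ (ℙ {ω | Z ω ≤ x}).toReal} := by
  have h := ProbabilityTheory.tendsto_cdf_atBot (Measure.map Z ℙ)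
  obtain ⟨x0, hx0⟩ := (h.eventually_lt_const hu).exists
  refine ⟨x0, fun s hs => ?_⟩
  by_contra hlt
  push_neg at hlt
  have h2 : (ℙ {ω | Z ω ≤ s}).toReal < u := by
    rw [aux_cdf_eq Z hZ]
    exact lt_of_le_of_lt (ProbabilityTheory.monotone_cdf _ hlt.le) hx0
  exact absurd hs (not_le.mpr h2)

end Aux

/-- comonotonic additivity for square loss: if `X` and `Y` are
integrable and comonotonic, `F_{X,Y}(x,y) = min{F_X(x), F_Y(y)}`, then the
square-loss generalized extremile `e(Z; D) = ∫₀¹ F_Z⁻¹(u) d(u) du` is additive: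
`e(X+Y; D) = e(X; D) + e(Y; D)`. -/
theorem stmt10 {Ω : Type*} [MeasureSpace Ω] [IsProbabilityMeasure (ℙ : Measure Ω)]
    (X Y : Ω → ℝ) (hX : Measurable X) (hY : Measurable Y)
    (hXi : Integrable X) (hYi : Integrable Y)
    (d : ℝ → ℝ)
    (hcom : ∀ x y : ℝ, (ℙ {ω | X ω ≤ x ∧ Y ω ≤ y}).toReal
      = min (ℙ {ω | X ω ≤ x}).toReal (ℙ {ω | Y ω ≤ y}).toReal)
    (Q : (Ω → ℝ) → ℝ → ℝ)
    (hQ : ∀ (Z : Ω → ℝ) (u : ℝ), Q Z u = sInf {x : ℝ | u ≤ (ℙ {ω | Z ω ≤ x}).toReal})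
    (hiXY : IntegrableOn (fun u => Q (fun ω => X ω + Y ω) u * d u) (Ioo (0:ℝ) 1))
    (hiX : IntegrableOn (fun u => Q X u * d u) (Ioo (0:ℝ) 1))
    (hiY : IntegrableOn (fun u => Q Y u * d u) (Ioo (0:ℝ) 1)) :
    ∫ u in Ioo (0:ℝ) 1, Q (fun ω => X ω + Y ω) u * d u
      = (∫ u in Ioo (0:ℝ) 1, Q X u * d u) + ∫ u in Ioo (0:ℝ) 1, Q Y u * d u := by
  have hXY : Measurable fun ω => X ω + Y ω := hX.add hY
  -- key pointwise identity
  have key : ∀ u ∈ Ioo (0:ℝ) 1,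
      Q (fun ω => X ω + Y ω) u = Q X u + Q Y u := by
    rintro u ⟨hu0, hu1⟩
    set SX := {x : ℝ | u ≤ (ℙ {ω | X ω ≤ x}).toReal} with hSX
    set SY := {x : ℝ | u ≤ (ℙ {ω | Y ω ≤ x}).toReal} with hSY
    set SZ := {x : ℝ | u ≤ (ℙ {ω | X ω + Y ω ≤ x}).toReal} with hSZ
    have hSXne : SX.Nonempty := aux_nonempty X hX hu1
    have hSYne : SY.Nonempty := aux_nonempty Y hY hu1
    have hSZne : SZ.Nonempty := aux_nonempty _ hXY hu1
    have hSXbb : BddBelow SX := aux_bddBelow X hX hu0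
    have hSYbb : BddBelow SY := aux_bddBelow Y hY hu0
    have hSZbb : BddBelow SZ := aux_bddBelow _ hXY hu0
    rw [hQ, hQ, hQ]
    have hfin : ∀ s : Set Ω, ℙ s ≠ ⊤ := fun s => measure_ne_top _ _
    apply le_antisymm
    · -- sInf SZ ≤ sInf SX + sInf SY
      have hmem : ∀ a ∈ SX, ∀ b ∈ SY, a + b ∈ SZ := by
        intro a ha b hb
        have hsub : {ω | X ω ≤ a ∧ Y ω ≤ b} ⊆ {ω | X ω + Y ω ≤ a + b} :=
          fun ω hω => add_le_add hω.1 hω.2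
        have hle : (ℙ {ω | X ω ≤ a ∧ Y ω ≤ b}).toReal
            ≤ (ℙ {ω | X ω + Y ω ≤ a + b}).toReal :=
          ENNReal.toReal_mono (hfin _) (measure_mono hsub)
        have : u ≤ (ℙ {ω | X ω ≤ a ∧ Y ω ≤ b}).toReal := by
          rw [hcom a b]; exact le_min ha hb
        exact this.trans hle
      have h1 : ∀ b ∈ SY, sInf SZ - b ≤ sInf SX := by
        intro b hb
        apply le_csInf hSXne
        intro a ha
        have := csInf_le hSZbb (hmem a ha b hb)
        linarith
      have h2 : sInf SZ - sInf SX ≤ sInf SY := by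
        apply le_csInf hSYne
        intro b hb
        have := h1 b hb
        linarith
      linarith
    · -- sInf SX + sInf SY ≤ sInf SZ
      apply le_csInf hSZne
      intro z hz
      by_contra hlt
      push_neg at hlt
      set x := (z + sInf SX - sInf SY) / 2 with hx
      set y := (z - sInf SX + sInf SY) / 2 with hy
      have hxy : x + y = z := by rw [hx, hy]; ring
      have hxlt : x < sInf SX := by rw [hx]; linarith
      have hylt : y < sInf SY := by rw [hy]; linarith
      -- {X+Y ≤ z} ⊆ {X ≤ x} ∪ {Y ≤ y}
      have hsub : {ω | X ω + Y ω ≤ z} ⊆ {ω | X ω ≤ x} ∪ {ω | Y ω ≤ y} := by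
        intro ω hω
        by_contra hn
        simp only [mem_union, mem_setOf_eq, not_or, not_le] at hn
        have : z < X ω + Y ω := by
          calc z = x + y := hxy.symm
          _ < X ω + Y ω := add_lt_add hn.1 hn.2
        exact absurd hω (not_le.mpr this)
      -- inclusion-exclusion
      have hA : MeasurableSet {ω | X ω ≤ x} := hX measurableSet_Iic
      have hB : MeasurableSet {ω | Y ω ≤ y} := hY measurableSet_Iic
      have hie : ℙ ({ω | X ω ≤ x} ∪ {ω | Y ω ≤ y})
          + ℙ ({ω | X ω ≤ x} ∩ {ω | Y ω ≤ y})
          = ℙ {ω | X ω ≤ x} + ℙ {ω | Y ω ≤ y} :=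
        measure_union_add_inter _ hB
      have hieR : (ℙ ({ω | X ω ≤ x} ∪ {ω | Y ω ≤ y})).toReal
          + (ℙ ({ω | X ω ≤ x} ∩ {ω | Y ω ≤ y})).toReal
          = (ℙ {ω | X ω ≤ x}).toReal + (ℙ {ω | Y ω ≤ y}).toReal := by
        rw [← ENNReal.toReal_add (hfin _) (hfin _), ← ENNReal.toReal_add (hfin _) (hfin _), hie]
      have hinter : ({ω | X ω ≤ x} ∩ {ω | Y ω ≤ y}) = {ω | X ω ≤ x ∧ Y ω ≤ y} := rfl
      rw [hinter, hcom x y] at hieR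
      have hmax : (ℙ ({ω | X ω ≤ x} ∪ {ω | Y ω ≤ y})).toReal
          = max (ℙ {ω | X ω ≤ x}).toReal (ℙ {ω | Y ω ≤ y}).toReal := by
        have := max_add_min (ℙ {ω | X ω ≤ x}).toReal (ℙ {ω | Y ω ≤ y}).toReal
        linarith
      have hu : u ≤ max (ℙ {ω | X ω ≤ x}).toReal (ℙ {ω | Y ω ≤ y}).toReal := by
        rw [← hmax]
        refine le_trans hz (ENNReal.toReal_mono (hfin _) (measure_mono hsub))
      rcases le_max_iff.mp hu with h | h
      · exact absurd (csInf_le hSXbb h) (not_le.mpr hxlt)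
      · exact absurd (csInf_le hSYbb h) (not_le.mpr hylt)
  calc ∫ u in Ioo (0:ℝ) 1, Q (fun ω => X ω + Y ω) u * d u
      = ∫ u in Ioo (0:ℝ) 1, (Q X u * d u + Q Y u * d u) := by
        apply setIntegral_congr_fun measurableSet_Ioo
        intro u hu
        dsimp only
        rw [key u hu]; ring
    _ = (∫ u in Ioo (0:ℝ) 1, Q X u * d u) + ∫ u in Ioo (0:ℝ) 1, Q Y u * d u :=
        integral_add hiX hiY
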